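/- Let D be a bounded b-inner uniform domain in ℝⁿ, i.e., every pair of points z₁, z₂ ∈ D can be joined by a rectifiable arc γ ⊂ D with ℓ(γ) ≤ b·δ_D(z₁,z₂) and min{ℓ(γ[z₁,z]), ℓ(γ[z₂,z])} ≤ b·d_D(z) for all z ∈ γ. Let x₀ ∈ D satisfy d_D(x₀) = sup_{x∈D} d_D(x). Then D has the 4b²-carrot property with center x₀: every y ∈ D can be joined to x₀ by a rectifiable arc α ⊂ D with ℓ(α[y,x]) ≤ 4b²·d_D(x) for all x ∈ α. -/

import Mathlib

open Metric Set

/-- The internal metric `δ_D(x,y)`: the infimum of diameters of arcs in `D`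
joining `x` and `y`. -/
noncomputable def innerDiamDist {n : ℕ} (D : Set (EuclideanSpace ℝ (Fin n)))
    (x y : EuclideanSpace ℝ (Fin n)) : ℝ :=
  sInf { d | ∃ γ : ℝ → EuclideanSpace ℝ (Fin n),
      ContinuousOn γ (Set.Icc 0 1) ∧ γ 0 = x ∧ γ 1 = y ∧
      (∀ t ∈ Set.Icc (0:ℝ) 1, γ t ∈ D) ∧ d = Metric.diam (γ '' Set.Icc 0 1) }

/- Auxiliary lemmas -/

private lemma sum_le_evar {E : Type*} [PseudoEMetricSpace E] (f : ℝ → E) {a : ℝ} (u : ℕ → ℝ)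
    (hu : Monotone u) (m : ℕ) (ha : ∀ i, a ≤ u i) :
    (∑ i ∈ Finset.range m, edist (f (u (i+1))) (f (u i))) ≤ eVariationOn f (Icc a (u m)) := by
  have hmono : Monotone (fun i => u (min i m)) := hu.comp (monotone_id.min monotone_const)
  have hmem : ∀ i, u (min i m) ∈ Icc a (u m) := fun i => ⟨ha _, hu (min_le_right i m)⟩
  have h := eVariationOn.sum_le (f := f) (n := m) hmono hmem
  refine le_trans (le_of_eq ?_) h
  refine Finset.sum_congr rfl ?_
  intro i hi
  rw [Finset.mem_range] at hi
  simp only [min_eq_left hi.le, min_eq_left (Nat.succ_le_of_lt hi)]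

private lemma evar_le_iSup {E : Type*} [PseudoEMetricSpace E] (f : ℝ → E) {a c : ℝ} (hac : a < c) :
    eVariationOn f (Icc a c) ≤
      ⨆ u : Ico a c, (eVariationOn f (Icc a (u : ℝ)) + edist (f (u : ℝ)) (f c)) := by
  refine iSup_le ?_
  rintro ⟨n, u, hu, ut⟩
  dsimp only
  by_cases hn : u n < c
  · refine le_iSup_of_le ⟨u n, (ut n).1, hn⟩ ?_
    exact le_trans (sum_le_evar f u hu n (fun i => (ut i).1)) le_self_add
  · have hnc : u n = c := le_antisymm (ut n).2 (not_lt.mp hn)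
    by_cases h0 : c ≤ u 0
    · have hall : ∀ i, u i = c := fun i => le_antisymm (ut i).2 (h0.trans (hu (Nat.zero_le i)))
      have : (∑ i ∈ Finset.range n, edist (f (u (i+1))) (f (u i))) = 0 :=
        Finset.sum_eq_zero fun i _ => by rw [hall (i+1), hall i, edist_self]
      rw [this]; exact zero_le
    · push_neg at h0
      classical
      set j := Nat.findGreatest (fun i => u i < c) n with hj
      have hjn : j ≤ n := Nat.findGreatest_le n
      have hPj : u j < c := Nat.findGreatest_spec (P := fun i => u i < c) (Nat.zero_le n) h0
      have hjlt : ∀ k, j < k → u k = c := by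
        intro k hk
        refine le_antisymm (ut k).2 ?_
        by_cases hkn : k ≤ n
        · exact not_lt.mp (Nat.findGreatest_is_greatest (P := fun i => u i < c) hk hkn)
        · push_neg at hkn
          calc c = u n := hnc.symm
            _ ≤ u k := hu hkn.le
      have hjn' : j < n := lt_of_le_of_ne hjn (fun h => (ne_of_lt hPj) (by rw [h]; exact hnc))
      have split : (∑ i ∈ Finset.range n, edist (f (u (i+1))) (f (u i))) =
          (∑ i ∈ Finset.range j, edist (f (u (i+1))) (f (u i))) + edist (f (u (j+1))) (f (u j)) := by
        rw [Finset.range_eq_Ico,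
          ← Finset.sum_Ico_consecutive _ (Nat.zero_le (j+1)) (Nat.succ_le_of_lt hjn')]
        have hz : (∑ i ∈ Finset.Ico (j+1) n, edist (f (u (i+1))) (f (u i))) = 0 := by
          refine Finset.sum_eq_zero ?_
          intro i hi
          rw [Finset.mem_Ico] at hi
          rw [hjlt (i+1) (by omega), hjlt i (by omega), edist_self]
        rw [hz, add_zero, ← Finset.range_eq_Ico, Finset.sum_range_succ]
      rw [split, hjlt (j+1) (Nat.lt_succ_self j)]
      refine le_iSup_of_le ⟨u j, (ut j).1, hPj⟩ ?_
      have key := sum_le_evar f u hu j (fun i => (ut i).1)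
      calc (∑ i ∈ Finset.range j, edist (f (u (i+1))) (f (u i))) + edist (f c) (f (u j))
          ≤ eVariationOn f (Icc a (u j)) + edist (f c) (f (u j)) := add_le_add_left key _
        _ = eVariationOn f (Icc a (u j)) + edist (f (u j)) (f c) := by rw [edist_comm]

private lemma tail_small_left {E : Type*} [PseudoEMetricSpace E] (f : ℝ → E) {a c : ℝ}
    (hac : a < c) (hcont : ContinuousWithinAt f (Icc a c) c)
    (hfin : eVariationOn f (Icc a c) ≠ ⊤) :
    ∀ ε : ℝ, 0 < ε → ∃ v ∈ Ico a c, eVariationOn f (Icc v c) ≤ ENNReal.ofReal ε := by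
  have hJ : ∀ ε : ℝ, 0 < ε →
      (⨅ v : Ico a c, eVariationOn f (Icc (v : ℝ) c)) ≤ ENNReal.ofReal ε := by
    intro ε hε
    set J := ⨅ v : Ico a c, eVariationOn f (Icc (v : ℝ) c) with hJdef
    have hball : EMetric.closedBall (f c) (ENNReal.ofReal ε) ∈ nhds (f c) :=
      EMetric.closedBall_mem_nhds _ (ENNReal.ofReal_pos.mpr hε)
    have hev := hcont hball
    rcases Metric.mem_nhdsWithin_iff.mp hev with ⟨δ, hδ, hsub⟩
    set v := max a (c - δ/2) with hv
    have hva : a ≤ v := le_max_left _ _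
    have hvc : v < c := max_lt hac (by linarith)
    have hkey : ∀ u, u ∈ Icc v c → edist (f u) (f c) ≤ ENNReal.ofReal ε := by
      intro u hu
      have h1 : u ∈ Metric.ball c δ := by
        rw [Metric.mem_ball, Real.dist_eq, abs_sub_lt_iff]
        have : c - δ/2 ≤ v := le_max_right _ _
        constructor <;> [linarith [hu.2]; linarith [hu.1]]
      have h2 : u ∈ Icc a c := ⟨hva.trans hu.1, hu.2⟩
      exact hsub ⟨h1, h2⟩
    set X := eVariationOn f (Icc v c) with hX
    have hXle : X ≤ eVariationOn f (Icc a c) :=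
      eVariationOn.mono f (Icc_subset_Icc hva le_rfl)
    have hXfin : X ≠ ⊤ := ne_top_of_le_ne_top hfin hXle
    have hJX : J ≤ X := iInf_le (fun v : Ico a c => eVariationOn f (Icc (v : ℝ) c)) ⟨v, hva, hvc⟩
    have h2 : X ≤ (X - J) + ENNReal.ofReal ε := by
      refine (evar_le_iSup f hvc).trans (iSup_le ?_)
      rintro ⟨u, huv, huc⟩
      have h3 : eVariationOn f (Icc v u) + eVariationOn f (Icc u c) = X := by
        simpa using eVariationOn.Icc_add_Icc f (s := univ) huv huc.le (mem_univ u)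
      have hJu : J ≤ eVariationOn f (Icc u c) := iInf_le (fun v : Ico a c => eVariationOn f (Icc (v : ℝ) c)) ⟨u, hva.trans huv, huc⟩
      have h4 : eVariationOn f (Icc v u) ≤ X - J :=
        ENNReal.le_sub_of_add_le_right (ne_top_of_le_ne_top hXfin hJX)
          (le_of_le_of_eq (add_le_add_right hJu _) h3)
      exact add_le_add h4 (hkey u ⟨huv, huc.le⟩)
    have h5 : X + J ≤ X + ENNReal.ofReal ε := by
      calc X + J ≤ ((X - J) + ENNReal.ofReal ε) + J := add_le_add_left h2 _
        _ = ((X - J) + J) + ENNReal.ofReal ε := by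
            rw [add_assoc, add_comm (ENNReal.ofReal ε) J, ← add_assoc]
        _ = X + ENNReal.ofReal ε := by rw [tsub_add_cancel_of_le hJX]
    exact (ENNReal.add_le_add_iff_left hXfin).mp h5
  intro ε hε
  have h1 : (⨅ v : Ico a c, eVariationOn f (Icc (v : ℝ) c)) < ENNReal.ofReal ε :=
    lt_of_le_of_lt (hJ (ε/2) (by linarith))
      ((ENNReal.ofReal_lt_ofReal_iff hε).mpr (by linarith))
  obtain ⟨⟨v, hv⟩, hlt⟩ := iInf_lt_iff.mp h1
  exact ⟨v, hv, hlt.le⟩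

private lemma tail_small_right {E : Type*} [PseudoEMetricSpace E] (f : ℝ → E) {a c : ℝ}
    (hac : a < c) (hcont : ContinuousWithinAt f (Icc a c) a)
    (hfin : eVariationOn f (Icc a c) ≠ ⊤) :
    ∀ ε : ℝ, 0 < ε → ∃ v ∈ Ioc a c, eVariationOn f (Icc a v) ≤ ENNReal.ofReal ε := by
  set φ : ℝ → ℝ := fun t => a + c - t with hφ
  have hφanti : AntitoneOn φ (Icc a c) := fun x _ y _ hxy => by
    simp only [hφ]; linarith
  have himg : ∀ p q : ℝ, φ '' Icc p q = Icc (a + c - q) (a + c - p) := by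
    intro p q
    have : φ = fun t => (a + c) - t := rfl
    rw [this, Set.image_const_sub_Icc]
  have hcomp : ∀ p q : ℝ, a ≤ p → q ≤ c → p ≤ q →
      eVariationOn (f ∘ φ) (Icc p q) = eVariationOn f (Icc (a + c - q) (a + c - p)) := by
    intro p q hp hq hpq
    rw [← himg p q]
    exact eVariationOn.comp_eq_of_antitoneOn f φ
      (hφanti.mono (Icc_subset_Icc hp hq))
  have hmaps : MapsTo φ (Icc a c) (Icc a c) := fun x hx =>
    ⟨by simp only [hφ]; linarith [hx.2], by simp only [hφ]; linarith [hx.1]⟩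
  have hc1 : ContinuousWithinAt (f ∘ φ) (Icc a c) c := by
    have hφc : ContinuousWithinAt φ (Icc a c) c :=
      (continuous_const.sub continuous_id).continuousWithinAt
    have h2 : ContinuousWithinAt f (Icc a c) (φ c) := by
      have hφc0 : φ c = a := by simp [hφ]
      rw [hφc0]; exact hcont
    exact h2.comp hφc hmaps
  have hfin' : eVariationOn (f ∘ φ) (Icc a c) ≠ ⊤ := by
    rw [hcomp a c le_rfl le_rfl hac.le]
    simpa using hfin
  intro ε hε
  obtain ⟨v, hv, hvar⟩ := tail_small_left (f ∘ φ) hac hc1 hfin' ε hε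
  refine ⟨a + c - v, ⟨by linarith [hv.2], by linarith [hv.1]⟩, ?_⟩
  have h := hcomp v c hv.1 le_rfl hv.2.le
  have h2 : a + c - c = a := by ring
  rw [h2] at h
  rw [← h]
  exact hvar

/-- A bounded `b`-inner uniform domain has the `4b²`-carrot property with center a
point `x₀` of maximal distance to the boundary. -/
theorem stmt6 {n : ℕ} (D : Set (EuclideanSpace ℝ (Fin n)))
    (hD : IsOpen D) (hDconn : IsConnected D) (hproper : Dᶜ.Nonempty)
    (hbdd : Bornology.IsBounded D) (b : ℝ) (hb : 1 ≤ b)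
    (hinner : ∀ z₁ ∈ D, ∀ z₂ ∈ D, ∃ γ : ℝ → EuclideanSpace ℝ (Fin n),
      ContinuousOn γ (Icc 0 1) ∧ γ 0 = z₁ ∧ γ 1 = z₂ ∧
      (∀ t ∈ Icc (0:ℝ) 1, γ t ∈ D) ∧
      eVariationOn γ (Icc 0 1) ≤ ENNReal.ofReal (b * innerDiamDist D z₁ z₂) ∧
      ∀ t ∈ Icc (0:ℝ) 1,
        min (eVariationOn γ (Icc 0 t)) (eVariationOn γ (Icc t 1)) ≤
          ENNReal.ofReal (b * infDist (γ t) Dᶜ))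
    (x₀ : EuclideanSpace ℝ (Fin n)) (hx₀ : x₀ ∈ D)
    (hmax : ∀ x ∈ D, infDist x Dᶜ ≤ infDist x₀ Dᶜ) :
    ∀ y ∈ D, ∃ α : ℝ → EuclideanSpace ℝ (Fin n),
      ContinuousOn α (Icc 0 1) ∧ α 0 = y ∧ α 1 = x₀ ∧
      (∀ t ∈ Icc (0:ℝ) 1, α t ∈ D) ∧
      ∀ t ∈ Icc (0:ℝ) 1,
        eVariationOn α (Icc 0 t) ≤ ENNReal.ofReal (4 * b ^ 2 * infDist (α t) Dᶜ) := by
  intro y hy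
  obtain ⟨γ, hγc, hγ0, hγ1, hγmem, hγlen, hγmin⟩ := hinner y hy x₀ hx₀
  refine ⟨γ, hγc, hγ0, hγ1, hγmem, ?_⟩
  set d₀ := infDist x₀ Dᶜ with hd₀def
  have hd₀0 : (0:ℝ) ≤ d₀ := infDist_nonneg
  have hb0 : (0:ℝ) < b := lt_of_lt_of_le one_pos hb
  have hfin : eVariationOn γ (Icc 0 1) ≠ ⊤ := ne_top_of_le_ne_top ENNReal.ofReal_ne_top hγlen
  set S : Set ℝ := {t | t ∈ Icc (0:ℝ) 1 ∧ eVariationOn γ (Icc 0 t) ≤ ENNReal.ofReal (b * d₀)}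
    with hSdef
  have h0S : (0:ℝ) ∈ S := by
    refine ⟨⟨le_rfl, zero_le_one⟩, ?_⟩
    rw [Set.Icc_self, eVariationOn.subsingleton γ subsingleton_singleton]
    exact zero_le
  have hSne : S.Nonempty := ⟨0, h0S⟩
  have hSbdd : BddAbove S := BddAbove.mono (fun t ht => ht.1) bddAbove_Icc
  set T := sSup S with hTdef
  have hT0 : 0 ≤ T := le_csSup hSbdd h0S
  have hT1 : T ≤ 1 := csSup_le hSne (fun t ht => ht.1.2)
  have hA : eVariationOn γ (Icc 0 T) ≤ ENNReal.ofReal (b * d₀) := by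
    rcases eq_or_lt_of_le hT0 with h | h
    · rw [← h, Set.Icc_self, eVariationOn.subsingleton γ subsingleton_singleton]
      exact zero_le
    · refine ENNReal.le_of_forall_pos_le_add ?_
      intro ε hε _
      have hc : ContinuousWithinAt γ (Icc 0 T) T :=
        (hγc T ⟨hT0, hT1⟩).mono (Icc_subset_Icc le_rfl hT1)
      have hfinT : eVariationOn γ (Icc 0 T) ≠ ⊤ :=
        ne_top_of_le_ne_top hfin (eVariationOn.mono γ (Icc_subset_Icc le_rfl hT1))
      obtain ⟨v, hv, hvar⟩ := tail_small_left γ h hc hfinT ε (by exact_mod_cast hε)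
      obtain ⟨s, hsS, hvs⟩ := exists_lt_of_lt_csSup hSne hv.2
      have hsT : s ≤ T := le_csSup hSbdd hsS
      have hsplit : eVariationOn γ (Icc 0 s) + eVariationOn γ (Icc s T) =
          eVariationOn γ (Icc 0 T) := by
        simpa using eVariationOn.Icc_add_Icc γ (s := univ) hsS.1.1 hsT (mem_univ s)
      calc eVariationOn γ (Icc 0 T)
          = eVariationOn γ (Icc 0 s) + eVariationOn γ (Icc s T) := hsplit.symm
        _ ≤ ENNReal.ofReal (b * d₀) + eVariationOn γ (Icc v T) :=
            add_le_add hsS.2 (eVariationOn.mono γ (Icc_subset_Icc hvs.le le_rfl))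
        _ ≤ ENNReal.ofReal (b * d₀) + ε := by
            refine add_le_add_right ?_ _
            rwa [ENNReal.ofReal_coe_nnreal] at hvar
  have hBs : ∀ s, T < s → s ≤ 1 → eVariationOn γ (Icc s 1) ≤ ENNReal.ofReal (b * d₀) := by
    intro s hTs hs1
    have hs0 : 0 ≤ s := le_of_lt (lt_of_le_of_lt hT0 hTs)
    have hnot : ¬ eVariationOn γ (Icc 0 s) ≤ ENNReal.ofReal (b * d₀) := by
      intro hcon
      exact absurd (le_csSup hSbdd ⟨⟨hs0, hs1⟩, hcon⟩) (not_le.mpr hTs)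
    have hds : infDist (γ s) Dᶜ ≤ d₀ := hmax _ (hγmem s ⟨hs0, hs1⟩)
    have hle : ENNReal.ofReal (b * infDist (γ s) Dᶜ) ≤ ENNReal.ofReal (b * d₀) :=
      ENNReal.ofReal_le_ofReal (mul_le_mul_of_nonneg_left hds hb0.le)
    rcases min_le_iff.mp (hγmin s ⟨hs0, hs1⟩) with h | h
    · exact absurd (h.trans hle) hnot
    · exact h.trans hle
  have hB : eVariationOn γ (Icc T 1) ≤ ENNReal.ofReal (b * d₀) := by
    rcases eq_or_lt_of_le hT1 with h | h
    · rw [h, Set.Icc_self, eVariationOn.subsingleton γ subsingleton_singleton]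
      exact zero_le
    · refine ENNReal.le_of_forall_pos_le_add ?_
      intro ε hε _
      have hc : ContinuousWithinAt γ (Icc T 1) T :=
        (hγc T ⟨hT0, hT1⟩).mono (Icc_subset_Icc hT0 le_rfl)
      have hfinT : eVariationOn γ (Icc T 1) ≠ ⊤ :=
        ne_top_of_le_ne_top hfin (eVariationOn.mono γ (Icc_subset_Icc hT0 le_rfl))
      obtain ⟨v, hv, hvar⟩ := tail_small_right γ h hc hfinT ε (by exact_mod_cast hε)
      have hsplit : eVariationOn γ (Icc T v) + eVariationOn γ (Icc v 1) =
          eVariationOn γ (Icc T 1) := by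
        simpa using eVariationOn.Icc_add_Icc γ (s := univ) hv.1.le hv.2 (mem_univ v)
      calc eVariationOn γ (Icc T 1)
          = eVariationOn γ (Icc T v) + eVariationOn γ (Icc v 1) := hsplit.symm
        _ ≤ ENNReal.ofReal ε + ENNReal.ofReal (b * d₀) :=
            add_le_add hvar (hBs v hv.1 hv.2)
        _ = ENNReal.ofReal (b * d₀) + ε := by
            rw [add_comm, ENNReal.ofReal_coe_nnreal]
  have htot : eVariationOn γ (Icc 0 1) ≤ ENNReal.ofReal (2 * b * d₀) := by
    have hsplit : eVariationOn γ (Icc 0 T) + eVariationOn γ (Icc T 1) =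
        eVariationOn γ (Icc 0 1) := by
      simpa using eVariationOn.Icc_add_Icc γ (s := univ) hT0 hT1 (mem_univ T)
    calc eVariationOn γ (Icc 0 1)
        = eVariationOn γ (Icc 0 T) + eVariationOn γ (Icc T 1) := hsplit.symm
      _ ≤ ENNReal.ofReal (b * d₀) + ENNReal.ofReal (b * d₀) := add_le_add hA hB
      _ = ENNReal.ofReal (2 * b * d₀) := by
          rw [← ENNReal.ofReal_add (by positivity) (by positivity)]
          ring_nf
  intro t ht
  set dt := infDist (γ t) Dᶜ with hdtdef
  have hdt0 : (0:ℝ) ≤ dt := infDist_nonneg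
  rcases min_le_iff.mp (hγmin t ht) with hcase | hcase
  · refine hcase.trans (ENNReal.ofReal_le_ofReal ?_)
    nlinarith [mul_nonneg (mul_nonneg (by linarith : (0:ℝ) ≤ b) (by linarith : (0:ℝ) ≤ 4*b - 1)) hdt0]
  · have hedist : edist (γ t) x₀ ≤ ENNReal.ofReal (b * dt) := by
      rw [← hγ1]
      exact (eVariationOn.edist_le γ (s := Icc t 1) ⟨le_rfl, ht.2⟩ ⟨ht.2, le_rfl⟩).trans hcase
    have hdist : dist (γ t) x₀ ≤ b * dt := by
      rw [edist_dist] at hedist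
      exact (ENNReal.ofReal_le_ofReal_iff (by positivity)).mp hedist
    have hd0dt : d₀ ≤ dt + b * dt := by
      calc d₀ ≤ infDist (γ t) Dᶜ + dist x₀ (γ t) := infDist_le_infDist_add_dist
        _ = dt + dist (γ t) x₀ := by rw [dist_comm]
        _ ≤ dt + b * dt := by linarith
    calc eVariationOn γ (Icc 0 t)
        ≤ eVariationOn γ (Icc 0 1) := eVariationOn.mono γ (Icc_subset_Icc le_rfl ht.2)
      _ ≤ ENNReal.ofReal (2 * b * d₀) := htot
      _ ≤ ENNReal.ofReal (4 * b ^ 2 * dt) := by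
          refine ENNReal.ofReal_le_ofReal ?_
          nlinarith [mul_nonneg (mul_nonneg hb0.le (by linarith : (0:ℝ) ≤ b - 1)) hdt0]
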